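/- Let G = (V,E) be a 3-sparse, 5-regular graph and let X, Y ⊂ V be 7-sets with X ∩ Y = {a,b} and ab ∈ E. Then d(X,Y) ≤ 3 and i(X ∪ Y) = 3|X ∪ Y| - 9 + d(X,Y). -/

import Mathlib

open Finset

variable {V : Type*} [Fintype V] [DecidableEq V]

/-- `i(X)`: the number of edges of `G` with both endpoints in `X`. -/
def edgesWithin (G : SimpleGraph V) [DecidableRel G.Adj] (X : Finset V) : ℕ :=
  ((X ×ˢ X).filter fun p => G.Adj p.1 p.2).card / 2

/-- `d(X,Y)`: the number of edges of `G` with one endpoint in `X \ Y` and the other in `Y \ X`. -/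
def edgesBetween (G : SimpleGraph V) [DecidableRel G.Adj] (X Y : Finset V) : ℕ :=
  (((X \ Y) ×ˢ (Y \ X)).filter fun p => G.Adj p.1 p.2).card

/-- `G` is 3-sparse: `i(X) ≤ 3|X| - 6` for all `X` with `|X| ≥ 3`. -/
def Sparse3 (G : SimpleGraph V) [DecidableRel G.Adj] : Prop :=
  ∀ X : Finset V, 3 ≤ X.card → edgesWithin G X + 6 ≤ 3 * X.card

/-- The set of common neighbours of `u` and `v`. -/
def commonNbrs (G : SimpleGraph V) [DecidableRel G.Adj] (u v : V) : Finset V :=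
  Finset.univ.filter fun t => G.Adj u t ∧ G.Adj v t

private lemma cnt_eq_sum (G : SimpleGraph V) [DecidableRel G.Adj] (A B : Finset V) :
    ((A ×ˢ B).filter fun p => G.Adj p.1 p.2).card
      = ∑ p ∈ (univ ×ˢ univ : Finset (V × V)),
          (if p.1 ∈ A ∧ p.2 ∈ B ∧ G.Adj p.1 p.2 then 1 else 0) := by
  have h : ((A ×ˢ B).filter fun p => G.Adj p.1 p.2)
      = ((univ ×ˢ univ : Finset (V × V)).filter
          fun p => p.1 ∈ A ∧ p.2 ∈ B ∧ G.Adj p.1 p.2) := by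
    ext p
    simp [Finset.mem_product, and_assoc]
  rw [h, Finset.card_filter]

private lemma E2_even (G : SimpleGraph V) [DecidableRel G.Adj] (S : Finset V) :
    Even ((S ×ˢ S).filter fun p => G.Adj p.1 p.2).card := by
  classical
  set T := (S ×ˢ S).filter fun p => G.Adj p.1 p.2 with hT
  let e := Fintype.equivFin V
  have hsplit := Finset.card_filter_add_card_filter_not
    (s := T) (p := fun p => e p.1 < e p.2)
  have hbij : (T.filter fun p => ¬ e p.1 < e p.2).card
      = (T.filter fun p => e p.1 < e p.2).card := by
    apply Finset.card_nbij' Prod.swap Prod.swap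
    · intro p hp
      simp only [hT, Finset.mem_coe, Finset.mem_filter, Finset.mem_product] at hp ⊢
      obtain ⟨⟨⟨h1, h2⟩, hadj⟩, hlt⟩ := hp
      have hne : e p.2 ≠ e p.1 := fun h => (G.ne_of_adj hadj) (e.injective h.symm)
      exact ⟨⟨⟨h2, h1⟩, hadj.symm⟩, lt_of_le_of_ne (not_lt.mp hlt) hne⟩
    · intro p hp
      simp only [hT, Finset.mem_coe, Finset.mem_filter, Finset.mem_product] at hp ⊢
      obtain ⟨⟨⟨h1, h2⟩, hadj⟩, hlt⟩ := hp
      exact ⟨⟨⟨h2, h1⟩, hadj.symm⟩, not_lt.mpr hlt.le⟩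
    · intro p _; exact Prod.swap_swap p
    · intro p _; exact Prod.swap_swap p
  exact ⟨(T.filter fun p => e p.1 < e p.2).card, by omega⟩

private lemma eb_symm (G : SimpleGraph V) [DecidableRel G.Adj] (X Y : Finset V) :
    edgesBetween G X Y = edgesBetween G Y X := by
  unfold edgesBetween
  apply Finset.card_nbij' Prod.swap Prod.swap
  · intro p hp
    simp only [Finset.mem_coe, Finset.mem_filter, Finset.mem_product] at hp ⊢
    exact ⟨⟨hp.1.2, hp.1.1⟩, hp.2.symm⟩
  · intro p hp
    simp only [Finset.mem_coe, Finset.mem_filter, Finset.mem_product] at hp ⊢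
    exact ⟨⟨hp.1.2, hp.1.1⟩, hp.2.symm⟩
  · intro p _; exact Prod.swap_swap p
  · intro p _; exact Prod.swap_swap p

theorem stmt9 (G : SimpleGraph V) [DecidableRel G.Adj]
    (hreg : ∀ v, G.degree v = 5) (hsp : Sparse3 G)
    (X Y : Finset V)
    (hX : edgesWithin G X + 7 = 3 * X.card)
    (hY : edgesWithin G Y + 7 = 3 * Y.card)
    (a b : V) (hab : a ≠ b) (hadj : G.Adj a b) (hint : X ∩ Y = {a, b}) :
    edgesBetween G X Y ≤ 3 ∧
    edgesWithin G (X ∪ Y) + 9 = 3 * (X ∪ Y).card + edgesBetween G X Y := by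
  classical
  have hIset : (((X ∩ Y) ×ˢ (X ∩ Y)).filter fun p => G.Adj p.1 p.2)
      = ({(a, b), (b, a)} : Finset (V × V)) := by
    rw [hint]
    ext p
    simp only [Finset.mem_filter, Finset.mem_product, Finset.mem_insert,
      Finset.mem_singleton, Prod.ext_iff]
    constructor
    · rintro ⟨⟨h1 | h1, h2 | h2⟩, hadj'⟩
      · rw [h1, h2] at hadj'; exact (G.irrefl hadj').elim
      · exact Or.inl ⟨h1, h2⟩
      · exact Or.inr ⟨h1, h2⟩
      · rw [h1, h2] at hadj'; exact (G.irrefl hadj').elim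
    · rintro (⟨h1, h2⟩ | ⟨h1, h2⟩) <;> rw [h1, h2] <;>
        simp [hadj, hadj.symm]
  have hIcnt : (((X ∩ Y) ×ˢ (X ∩ Y)).filter fun p => G.Adj p.1 p.2).card = 2 := by
    rw [hIset]
    rw [Finset.card_insert_of_notMem (by simp [Prod.ext_iff, hab]), Finset.card_singleton]
  have key : ((X ∪ Y) ×ˢ (X ∪ Y) |>.filter fun p => G.Adj p.1 p.2).card
        + (((X ∩ Y) ×ˢ (X ∩ Y)).filter fun p => G.Adj p.1 p.2).card
      = ((X ×ˢ X).filter fun p => G.Adj p.1 p.2).card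
        + ((Y ×ˢ Y).filter fun p => G.Adj p.1 p.2).card
        + edgesBetween G X Y + edgesBetween G Y X := by
    unfold edgesBetween
    rw [cnt_eq_sum, cnt_eq_sum, cnt_eq_sum, cnt_eq_sum, cnt_eq_sum, cnt_eq_sum]
    rw [← Finset.sum_add_distrib, ← Finset.sum_add_distrib, ← Finset.sum_add_distrib,
      ← Finset.sum_add_distrib]
    apply Finset.sum_congr rfl
    intro p _
    by_cases h1 : p.1 ∈ X <;> by_cases h2 : p.1 ∈ Y <;> by_cases h3 : p.2 ∈ X <;>
      by_cases h4 : p.2 ∈ Y <;> by_cases h5 : G.Adj p.1 p.2 <;>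
      simp [h1, h2, h3, h4, h5, Finset.mem_union, Finset.mem_inter, Finset.mem_sdiff]
  have hEW : ∀ S : Finset V,
      ((S ×ˢ S).filter fun p => G.Adj p.1 p.2).card = 2 * edgesWithin G S := by
    intro S
    obtain ⟨k, hk⟩ := E2_even G S
    unfold edgesWithin
    omega
  have hsym := eb_symm G X Y
  have hIcard : (X ∩ Y).card = 2 := by rw [hint]; exact Finset.card_pair hab
  have hcard : (X ∪ Y).card + 2 = X.card + Y.card := by
    rw [← hIcard]; exact Finset.card_union_add_card_inter X Y
  have hXc : 3 ≤ X.card := by omega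
  have hsparse := hsp (X ∪ Y) (by omega)
  rw [hEW (X ∪ Y), hEW X, hEW Y, hIcnt] at key
  omega
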